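/- Let Y be a real inner product space and let x_0, …, x_m (m ≥ 1) be distinct points of Y. Let Γ = min { 4 ‖∑_i ξ_i x_i‖² | ξ ∈ ℝ^{m+1}, ∑_i ξ_i = 0, ∑_i |ξ_i| = 1 } (this minimum is attained). Then: (a) for every ξ ∈ ℝ^{m+1} with ∑_i ξ_i = 0, Γ·(∑_i |ξ_i|)² + 2 ∑_{i,j} ξ_i ξ_j ‖x_i − x_j‖² ≤ 0; and (b) Γ is the largest real constant with property (a). (That is, the 2-negative type gap Γ₂ of {x_0,…,x_m} equals Γ.) -/

import Mathlib

private theorem key19 (Y : Type*) [NormedAddCommGroup Y] [InnerProductSpace ℝ Y]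
    (m : ℕ) (x : Fin (m + 1) → Y) (ξ : Fin (m + 1) → ℝ) (hξ : ∑ i, ξ i = 0) :
    ∑ i, ∑ j, ξ i * ξ j * ‖x i - x j‖ ^ 2 = -(2 * ‖∑ i, ξ i • x i‖ ^ 2) := by
  have hnorm : ‖∑ i, ξ i • x i‖ ^ 2 = ∑ i, ∑ j, ξ i * ξ j * (inner ℝ (x i) (x j) : ℝ) := by
    rw [← real_inner_self_eq_norm_sq, sum_inner]
    refine Finset.sum_congr rfl fun i _ => ?_
    rw [inner_sum]
    simp only [real_inner_smul_left, real_inner_smul_right]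
    exact Finset.sum_congr rfl fun j _ => by ring
  have expand : ∀ i j, ξ i * ξ j * ‖x i - x j‖ ^ 2 =
      ξ i * ‖x i‖ ^ 2 * ξ j + ξ i * (ξ j * ‖x j‖ ^ 2)
        - 2 * (ξ i * ξ j * (inner ℝ (x i) (x j) : ℝ)) := by
    intro i j
    rw [show ‖x i - x j‖ ^ 2 = ‖x i‖ ^ 2 - 2 * (inner ℝ (x i) (x j) : ℝ) + ‖x j‖ ^ 2 from
      norm_sub_sq_real (x i) (x j)]
    ring
  calc ∑ i, ∑ j, ξ i * ξ j * ‖x i - x j‖ ^ 2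
      = ∑ i, ((ξ i * ‖x i‖ ^ 2) * ∑ j, ξ j + ξ i * ∑ j, (ξ j * ‖x j‖ ^ 2)
          - 2 * ∑ j, ξ i * ξ j * (inner ℝ (x i) (x j) : ℝ)) := by
        refine Finset.sum_congr rfl fun i _ => ?_
        rw [Finset.mul_sum, Finset.mul_sum, Finset.mul_sum, ← Finset.sum_add_distrib,
          ← Finset.sum_sub_distrib]
        exact Finset.sum_congr rfl fun j _ => expand i j
    _ = -(2 * ‖∑ i, ξ i • x i‖ ^ 2) := by
        simp only [hξ, mul_zero, zero_add]
        rw [Finset.sum_sub_distrib, ← Finset.sum_mul, ← Finset.mul_sum, hξ, zero_mul,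
          zero_sub, hnorm]

theorem stmt19 (Y : Type*) [NormedAddCommGroup Y] [InnerProductSpace ℝ Y]
    (m : ℕ) (hm : 1 ≤ m) (x : Fin (m + 1) → Y) (hinj : Function.Injective x) :
    ∃ Γ : ℝ,
      IsLeast { t : ℝ | ∃ ξ : Fin (m + 1) → ℝ, ∑ i, ξ i = 0 ∧ ∑ i, |ξ i| = 1 ∧
          t = 4 * ‖∑ i, ξ i • x i‖ ^ 2 } Γ ∧
      (∀ ξ : Fin (m + 1) → ℝ, ∑ i, ξ i = 0 →
        Γ * (∑ i, |ξ i|) ^ 2 + 2 * ∑ i, ∑ j, ξ i * ξ j * ‖x i - x j‖ ^ 2 ≤ 0) ∧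
      (∀ Γ' : ℝ,
        (∀ ξ : Fin (m + 1) → ℝ, ∑ i, ξ i = 0 →
          Γ' * (∑ i, |ξ i|) ^ 2 + 2 * ∑ i, ∑ j, ξ i * ξ j * ‖x i - x j‖ ^ 2 ≤ 0) →
        Γ' ≤ Γ) := by
  set S : Set (Fin (m + 1) → ℝ) := {ξ | ∑ i, ξ i = 0 ∧ ∑ i, |ξ i| = 1} with hS
  set f : (Fin (m + 1) → ℝ) → ℝ := fun ξ => 4 * ‖∑ i, ξ i • x i‖ ^ 2 with hf
  have hc1 : Continuous fun ξ : Fin (m + 1) → ℝ => ∑ i, ξ i :=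
    continuous_finset_sum _ fun i _ => continuous_apply i
  have hc2 : Continuous fun ξ : Fin (m + 1) → ℝ => ∑ i, |ξ i| :=
    continuous_finset_sum _ fun i _ => (continuous_apply i).abs
  have hcf : Continuous f := by
    apply Continuous.mul continuous_const
    exact ((continuous_finset_sum _ fun i _ =>
      (continuous_apply i).smul continuous_const).norm.pow 2)
  have hclosed : IsClosed S := by
    have : S = {ξ : Fin (m + 1) → ℝ | ∑ i, ξ i = 0} ∩ {ξ | ∑ i, |ξ i| = 1} := rfl
    rw [this]
    exact (isClosed_eq hc1 continuous_const).inter (isClosed_eq hc2 continuous_const)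
  have hsub : S ⊆ Metric.closedBall 0 1 := by
    intro ξ hξ
    rw [Metric.mem_closedBall, dist_zero_right]
    rw [pi_norm_le_iff_of_nonneg zero_le_one]
    intro i
    rw [Real.norm_eq_abs]
    calc |ξ i| ≤ ∑ j, |ξ j| :=
          Finset.single_le_sum (f := fun j => |ξ j|) (fun j _ => abs_nonneg _)
            (Finset.mem_univ i)
      _ = 1 := hξ.2
  have hcpt : IsCompact S :=
    (isCompact_closedBall (0 : Fin (m + 1) → ℝ) 1).of_isClosed_subset hclosed hsub
  have h01 : (0 : Fin (m + 1)) ≠ 1 := by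
    simp [Fin.ext_iff, Fin.val_one']
    omega
  have hne : S.Nonempty := by
    refine ⟨fun i => (if i = 0 then (2:ℝ)⁻¹ else 0) + (if i = 1 then -(2:ℝ)⁻¹ else 0), ?_, ?_⟩
    · rw [Finset.sum_add_distrib,
        Finset.sum_ite_eq' Finset.univ (0 : Fin (m + 1)) (fun _ => (2:ℝ)⁻¹),
        Finset.sum_ite_eq' Finset.univ (1 : Fin (m + 1)) (fun _ => -(2:ℝ)⁻¹)]
      simp
    · have habs : ∀ i : Fin (m + 1),
          |(if i = 0 then (2:ℝ)⁻¹ else 0) + (if i = 1 then -(2:ℝ)⁻¹ else 0)| =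
          (if i = 0 then (2:ℝ)⁻¹ else 0) + (if i = 1 then (2:ℝ)⁻¹ else 0) := by
        intro i
        rcases eq_or_ne i 0 with h0 | h0
        · subst h0
          rw [if_pos rfl, if_neg h01, if_neg h01]
          norm_num
        · rcases eq_or_ne i 1 with h1 | h1
          · subst h1
            rw [if_neg h0, if_pos rfl, if_pos rfl]
            norm_num
          · rw [if_neg h0, if_neg h1, if_neg h1]
            norm_num
      rw [Finset.sum_congr rfl fun i _ => habs i, Finset.sum_add_distrib,
        Finset.sum_ite_eq' Finset.univ (0 : Fin (m + 1)) (fun _ => (2:ℝ)⁻¹),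
        Finset.sum_ite_eq' Finset.univ (1 : Fin (m + 1)) (fun _ => (2:ℝ)⁻¹)]
      simp
      norm_num
  obtain ⟨ξ₀, hξ₀S, hmin⟩ := hcpt.exists_isMinOn hne hcf.continuousOn
  refine ⟨f ξ₀, ⟨⟨ξ₀, hξ₀S.1, hξ₀S.2, rfl⟩, ?_⟩, ?_, ?_⟩
  · rintro t ⟨ξ, h1, h2, rfl⟩
    exact isMinOn_iff.mp hmin ξ ⟨h1, h2⟩
  · intro ξ hξ
    rw [key19 Y m x ξ hξ]
    set s := ∑ i, |ξ i| with hs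
    rcases eq_or_lt_of_le (Finset.sum_nonneg fun i _ => abs_nonneg (ξ i)) with h0 | hpos
    · have hz : ∀ i, ξ i = 0 := by
        intro i
        have := (Finset.sum_eq_zero_iff_of_nonneg fun i _ => abs_nonneg (ξ i)).mp h0.symm
        exact abs_eq_zero.mp (this i (Finset.mem_univ i))
      have hs0 : s = 0 := by rw [hs, ← h0]
      simp [hs0, hz]
    · have hsne : s ≠ 0 := ne_of_gt hpos
      set η : Fin (m + 1) → ℝ := fun i => ξ i / s with hη
      have hη1 : ∑ i, η i = 0 := by
        simp only [hη, div_eq_mul_inv, ← Finset.sum_mul, hξ, zero_mul]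
      have hη2 : ∑ i, |η i| = 1 := by
        have habs : ∀ i, |η i| = |ξ i| * s⁻¹ := by
          intro i
          simp only [hη]
          rw [abs_div, abs_of_pos hpos, div_eq_mul_inv]
        rw [Finset.sum_congr rfl fun i _ => habs i, ← Finset.sum_mul, ← hs,
          mul_inv_cancel₀ hsne]
      have hηx : ∑ i, η i • x i = s⁻¹ • ∑ i, ξ i • x i := by
        rw [Finset.smul_sum]
        refine Finset.sum_congr rfl fun i _ => ?_
        rw [smul_smul]
        simp only [hη]
        congr 1
        field_simp
      have hle : ‖∑ i, ξ₀ i • x i‖ ^ 2 ≤ (s ^ 2)⁻¹ * ‖∑ i, ξ i • x i‖ ^ 2 := by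
        have := isMinOn_iff.mp hmin η ⟨hη1, hη2⟩
        rw [hf] at this
        simpa [hηx, norm_smul, mul_pow, Real.norm_eq_abs,
          abs_of_pos (inv_pos.mpr hpos)] using this
      have h3 : ((s ^ 2)⁻¹ * ‖∑ i, ξ i • x i‖ ^ 2) * s ^ 2 = ‖∑ i, ξ i • x i‖ ^ 2 := by
        field_simp
      have h4 : ‖∑ i, ξ₀ i • x i‖ ^ 2 * s ^ 2 ≤ ‖∑ i, ξ i • x i‖ ^ 2 :=
        h3 ▸ mul_le_mul_of_nonneg_right hle (sq_nonneg s)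
      simp only [hf]
      linarith
  · intro Γ' hΓ'
    have := hΓ' ξ₀ hξ₀S.1
    rw [key19 Y m x ξ₀ hξ₀S.1, hξ₀S.2] at this
    simp only [hf]
    linarith
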